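/- The clobber position ooxox is equivalent to star, the game {0 | 0}. -/

import Mathlib

namespace SetTheory

universe u

/-- Pre-games (removed from Mathlib; reproduced with the Mathlib (Dec 2024) meaning). -/
inductive PGame : Type (u + 1)
  | mk : ∀ α β : Type u, (α → PGame) → (β → PGame) → PGame

namespace PGame

-- `x ≤ y` and `x ⧏ y`, as the (unique, by well-foundedness) solution of Mathlib's `le_def` / `lf_def`.
mutual
inductive Le : PGame.{u} → PGame.{u} → Prop
  | intro {xl xr : Type u} {xL : xl → PGame} {xR : xr → PGame}
      {yl yr : Type u} {yL : yl → PGame} {yR : yr → PGame} :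
      (∀ i, Lf (xL i) (mk yl yr yL yR)) → (∀ j, Lf (mk xl xr xL xR) (yR j)) →
      Le (mk xl xr xL xR) (mk yl yr yL yR)
inductive Lf : PGame.{u} → PGame.{u} → Prop
  | left {xl xr : Type u} {xL : xl → PGame} {xR : xr → PGame}
      {yl yr : Type u} {yL : yl → PGame} {yR : yr → PGame} (j : yl) :
      Le (mk xl xr xL xR) (yL j) → Lf (mk xl xr xL xR) (mk yl yr yL yR)
  | right {xl xr : Type u} {xL : xl → PGame} {xR : xr → PGame}
      {yl yr : Type u} {yL : yl → PGame} {yR : yr → PGame} (i : xr) :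
      Le (xR i) (mk yl yr yL yR) → Lf (mk xl xr xL xR) (mk yl yr yL yR)
end

instance : LE PGame.{u} := ⟨Le⟩

/-- Equivalence of pre-games: `x ≤ y ∧ y ≤ x`. -/
def Equiv (x y : PGame.{u}) : Prop := x ≤ y ∧ y ≤ x

instance : HasEquiv PGame.{u} := ⟨Equiv⟩

instance : Zero PGame.{u} := ⟨mk PEmpty PEmpty PEmpty.elim PEmpty.elim⟩

/-- `star = {0|0}`. -/
def star : PGame.{u} := mk PUnit PUnit (fun _ => 0) (fun _ => 0)

/-- Mathlib's `PGame.ofLists`. -/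
def ofLists (L R : List PGame.{u}) : PGame.{u} :=
  mk (ULift (Fin L.length)) (ULift (Fin R.length)) (fun i => L.get i.down) fun j => R.get j.down

end PGame

end SetTheory

open SetTheory PGame

inductive Cell | x | o | e
deriving DecidableEq

abbrev Pos := List Cell

/-- All positions reachable by one move of the player with stones `me`
clobbering an adjacent stone of the opponent `opp`. -/
def movesAux (me opp : Cell) : Pos → List Pos
  | a :: b :: rest =>
      (if a = me ∧ b = opp then [Cell.e :: me :: rest] else []) ++
      (if a = opp ∧ b = me then [me :: Cell.e :: rest] else []) ++
      (movesAux me opp (b :: rest)).map (a :: ·)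
  | _ => []

def leftMoves (p : Pos) : List Pos := movesAux Cell.x Cell.o p
def rightMoves (p : Pos) : List Pos := movesAux Cell.o Cell.x p

def stones (p : Pos) : Nat := p.countP (· != Cell.e)

/-- Game value of a clobber position, via fuel recursion (each move removes one stone). -/
def valueFuel : Nat → Pos → PGame
  | 0, _ => 0
  | n+1, p => PGame.ofLists ((leftMoves p).map (valueFuel n)) ((rightMoves p).map (valueFuel n))

def value (p : Pos) : PGame := valueFuel (stones p) p

namespace SetTheory

namespace PGame

universe v

def LeftMoves : PGame.{v} → Type v
  | mk l _ _ _ => l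

def RightMoves : PGame.{v} → Type v
  | mk _ r _ _ => r

def moveLeft : (x : PGame.{v}) → x.LeftMoves → PGame.{v}
  | mk _ _ L _ => L

def moveRight : (x : PGame.{v}) → x.RightMoves → PGame.{v}
  | mk _ _ _ R => R

infix:50 " ⧏ " => SetTheory.PGame.Lf

theorem le_iff_forall_lf {x y : PGame.{v}} :
    x ≤ y ↔ (∀ i, x.moveLeft i ⧏ y) ∧ ∀ j, x ⧏ y.moveRight j := by
  cases x
  cases y
  constructor
  · intro h
    change Le _ _ at h
    cases h with
    | intro h1 h2 => exact ⟨h1, h2⟩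
  · rintro ⟨h1, h2⟩
    exact Le.intro h1 h2

theorem le_zero_lf {x : PGame.{v}} : x ≤ 0 ↔ ∀ i, x.moveLeft i ⧏ 0 := by
  rw [le_iff_forall_lf]
  constructor
  · exact fun h => h.1
  · intro h
    exact ⟨h, fun j => PEmpty.elim j⟩

theorem zero_le_lf {x : PGame.{v}} : 0 ≤ x ↔ ∀ j, 0 ⧏ x.moveRight j := by
  rw [le_iff_forall_lf]
  constructor
  · exact fun h => h.2
  · intro h
    exact ⟨fun i => PEmpty.elim i, h⟩

theorem lf_of_moveRight_le {x y : PGame.{v}} {j : x.RightMoves} (h : x.moveRight j ≤ y) :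
    x ⧏ y := by
  cases x
  cases y
  exact Lf.right j h

theorem lf_of_le_moveLeft {x y : PGame.{v}} {i : y.LeftMoves} (h : x ≤ y.moveLeft i) :
    x ⧏ y := by
  cases x
  cases y
  exact Lf.left i h

theorem star_moveLeft (i : star.{v}.LeftMoves) : star.{v}.moveLeft i = 0 := rfl

theorem star_moveRight (j : star.{v}.RightMoves) : star.{v}.moveRight j = 0 := rfl

end PGame

end SetTheory

namespace ClobberAux

open Cell

lemma le_zero_of_left_nil (n : ℕ) (p : Pos) (h : leftMoves p = []) :
    valueFuel (n+1) p ≤ 0 := by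
  rw [valueFuel, le_zero_lf, h]
  intro i
  exact i.down.elim0

lemma zero_le_of_right_nil (n : ℕ) (p : Pos) (h : rightMoves p = []) :
    0 ≤ valueFuel (n+1) p := by
  rw [valueFuel, zero_le_lf, h]
  intro j
  exact j.down.elim0

-- depth-3 leaves (fuel 2)
lemma A1 : valueFuel 2 [x,e,e,e,o] ≤ 0 := le_zero_of_left_nil 1 _ rfl
lemma A2 : valueFuel 2 [e,o,e,x,e] ≤ 0 := le_zero_of_left_nil 1 _ rfl
lemma A3 : (0 : PGame) ≤ valueFuel 2 [o,e,x,e,e] := zero_le_of_right_nil 1 _ rfl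
lemma A4 : valueFuel 2 [o,e,e,o,e] ≤ 0 := le_zero_of_left_nil 1 _ rfl
lemma A5 : (0 : PGame) ≤ valueFuel 2 [o,e,e,o,e] := zero_le_of_right_nil 1 _ rfl
lemma A6 : (0 : PGame) ≤ valueFuel 2 [x,e,e,e,o] := zero_le_of_right_nil 1 _ rfl
lemma A7 : (0 : PGame) ≤ valueFuel 2 [e,o,e,e,o] := zero_le_of_right_nil 1 _ rfl

-- depth-2 facts (fuel 3)
lemma B1 : valueFuel 3 [x,e,e,o,x] ⧏ 0 :=
  lf_of_moveRight_le (j := (⟨(0 : Fin 1)⟩ :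
    (PGame.ofLists ((leftMoves [x,e,e,o,x]).map (valueFuel 2))
      ((rightMoves [x,e,e,o,x]).map (valueFuel 2))).RightMoves)) A1

lemma B2 : valueFuel 3 [o,x,e,x,e] ⧏ 0 :=
  lf_of_moveRight_le (j := (⟨(0 : Fin 1)⟩ :
    (PGame.ofLists ((leftMoves [o,x,e,x,e]).map (valueFuel 2))
      ((rightMoves [o,x,e,x,e]).map (valueFuel 2))).RightMoves)) A2

lemma B3 : star ≤ valueFuel 3 [o,e,o,x,e] := by
  rw [le_iff_forall_lf]
  constructor
  · intro i
    rw [star_moveLeft]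
    exact lf_of_le_moveLeft (i := (⟨(0 : Fin 1)⟩ :
      (PGame.ofLists ((leftMoves [o,e,o,x,e]).map (valueFuel 2))
        ((rightMoves [o,e,o,x,e]).map (valueFuel 2))).LeftMoves)) A3
  · rintro ⟨⟨j, hj⟩⟩
    have hj' : j < 1 := hj
    interval_cases j
    exact lf_of_moveRight_le (j := PUnit.unit) A5

lemma B4 : star ≤ valueFuel 3 [o,x,e,e,o] := by
  rw [le_iff_forall_lf]
  constructor
  · intro i
    rw [star_moveLeft]
    exact lf_of_le_moveLeft (i := (⟨(0 : Fin 1)⟩ :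
      (PGame.ofLists ((leftMoves [o,x,e,e,o]).map (valueFuel 2))
        ((rightMoves [o,x,e,e,o]).map (valueFuel 2))).LeftMoves)) A6
  · rintro ⟨⟨j, hj⟩⟩
    have hj' : j < 1 := hj
    interval_cases j
    exact lf_of_moveRight_le (j := PUnit.unit) A7

-- depth-1 facts (fuel 4)
lemma CL1 : valueFuel 4 [o,x,e,o,x] ≤ 0 := by
  rw [valueFuel, le_zero_lf]
  rintro ⟨⟨i, hi⟩⟩
  have hi' : i < 2 := hi
  interval_cases i
  · exact B1
  · exact B2

lemma CL2 : (0 : PGame) ≤ valueFuel 4 [o,o,e,x,x] := zero_le_of_right_nil 3 _ rfl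
lemma CL2' : valueFuel 4 [o,o,e,x,x] ≤ 0 := le_zero_of_left_nil 3 _ rfl

lemma CL3 : valueFuel 4 [o,o,x,x,e] ≤ 0 := by
  rw [valueFuel, le_zero_lf]
  rintro ⟨⟨i, hi⟩⟩
  have hi' : i < 1 := hi
  interval_cases i
  exact B2

lemma CR1 : star ⧏ valueFuel 4 [o,e,o,o,x] :=
  lf_of_le_moveLeft (i := (⟨(0 : Fin 1)⟩ :
    (PGame.ofLists ((leftMoves [o,e,o,o,x]).map (valueFuel 3))
      ((rightMoves [o,e,o,o,x]).map (valueFuel 3))).LeftMoves)) B3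

lemma CR2 : valueFuel 4 [o,o,o,e,x] ≤ 0 := le_zero_of_left_nil 3 _ rfl
lemma CR2' : (0 : PGame) ≤ valueFuel 4 [o,o,o,e,x] := zero_le_of_right_nil 3 _ rfl

lemma CR3 : star ⧏ valueFuel 4 [o,o,x,e,o] :=
  lf_of_le_moveLeft (i := (⟨(0 : Fin 1)⟩ :
    (PGame.ofLists ((leftMoves [o,o,x,e,o]).map (valueFuel 3))
      ((rightMoves [o,o,x,e,o]).map (valueFuel 3))).LeftMoves)) B4

end ClobberAux

/-- The clobber position `ooxox` is equivalent to `* = {0|0}`. -/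
theorem ooxox_equiv_star :
    value [Cell.o, Cell.o, Cell.x, Cell.o, Cell.x] ≈ star := by
  open Cell ClobberAux in
  constructor
  · -- value ≤ star
    rw [value, stones, le_iff_forall_lf]
    constructor
    · rintro ⟨⟨i, hi⟩⟩
      have hi' : i < 3 := hi
      interval_cases i
      · exact lf_of_le_moveLeft (i := PUnit.unit) CL1
      · exact lf_of_le_moveLeft (i := PUnit.unit) CL2'
      · exact lf_of_le_moveLeft (i := PUnit.unit) CL3
    · intro j
      have : valueFuel 5 [o,o,x,o,x] ⧏ 0 :=
        lf_of_moveRight_le (j := (⟨(1 : Fin 3)⟩ :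
          (PGame.ofLists ((leftMoves [o,o,x,o,x]).map (valueFuel 4))
            ((rightMoves [o,o,x,o,x]).map (valueFuel 4))).RightMoves)) CR2
      simpa [star_moveRight] using this
  · -- star ≤ value
    rw [value, stones, le_iff_forall_lf]
    constructor
    · intro i
      rw [star_moveLeft]
      exact lf_of_le_moveLeft (i := (⟨(1 : Fin 3)⟩ :
        (PGame.ofLists ((leftMoves [o,o,x,o,x]).map (valueFuel 4))
          ((rightMoves [o,o,x,o,x]).map (valueFuel 4))).RightMoves)) CL2
    · rintro ⟨⟨j, hj⟩⟩
      have hj' : j < 3 := hj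
      interval_cases j
      · exact CR1
      · exact lf_of_moveRight_le (j := PUnit.unit) CR2'
      · exact CR3
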